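/- arXiv:2604.20425 — 5 statements merged into one kernel-verified Lean document; each statement's English description precedes it below -/
import Mathlib

section
/- The set of (−1)-classes in L has exactly 16 elements, and the Weyl group W acts transitively on this set. -/
/-- The lattice L = ℤ⁶, modelling the Picard lattice of a del Pezzo surface of degree 4. -/
abbrev L6 : Type := Fin 6 → ℤ

/-- The bilinear form B((a₀,…,a₅),(b₀,…,b₅)) = a₀b₀ − a₁b₁ − ⋯ − a₅b₅. -/
def BL (v w : L6) : ℤ :=
  v 0 * w 0 - v 1 * w 1 - v 2 * w 2 - v 3 * w 3 - v 4 * w 4 - v 5 * w 5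

/-- The canonical class K = (−3,1,1,1,1,1). -/
def KL : L6 := ![-3, 1, 1, 1, 1, 1]

/-- Reflections in roots: α is a root if B(α,α) = −2 and B(α,K) = 0, and the reflection
in α is x ↦ x + B(x,α)·α. -/
def reflections : Set (L6 ≃ₗ[ℤ] L6) :=
  {f | ∃ α : L6, (BL α α = -2 ∧ BL α KL = 0) ∧ ∀ x : L6, f x = x + BL x α • α}

/-- The Weyl group W (of type D₅), generated by the reflections in all roots. -/
def W5 : Subgroup (L6 ≃ₗ[ℤ] L6) := Subgroup.closure reflections

/-- The set of (−1)-classes: v with B(v,v) = −1 and B(v,K) = −1. -/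
def minusOneClasses : Set L6 := {v | BL v v = -1 ∧ BL v KL = -1}

/-!
STATEMENT 0: The set of (−1)-classes in L has exactly 16 elements, and the Weyl group W
acts transitively on this set.
-/


def clsList : List L6 :=
  [![0,1,0,0,0,0], ![0,0,1,0,0,0], ![0,0,0,1,0,0], ![0,0,0,0,1,0], ![0,0,0,0,0,1],
   ![1,-1,-1,0,0,0], ![1,-1,0,-1,0,0], ![1,-1,0,0,-1,0], ![1,-1,0,0,0,-1],
   ![1,0,-1,-1,0,0], ![1,0,-1,0,-1,0], ![1,0,-1,0,0,-1],
   ![1,0,0,-1,-1,0], ![1,0,0,-1,0,-1], ![1,0,0,0,-1,-1],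
   ![2,-1,-1,-1,-1,-1]]

lemma BL_add_smul (x α : L6) (c : ℤ) : BL (x + c • α) α = BL x α + c * BL α α := by
  simp [BL]; ring

def reflE (α : L6) (h2 : BL α α = -2) : L6 ≃ₗ[ℤ] L6 where
  toFun x := x + BL x α • α
  invFun x := x + BL x α • α
  left_inv x := by simp only [BL_add_smul, h2]; module
  right_inv x := by simp only [BL_add_smul, h2]; module
  map_add' x y := by
    have h : BL (x + y) α = BL x α + BL y α := by simp [BL]; ring
    show (x + y) + BL (x+y) α • α = (x + BL x α • α) + (y + BL y α • α)
    rw [h]; module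
  map_smul' c x := by
    have h : BL (c • x) α = c * BL x α := by simp [BL]; ring
    show (c • x) + BL (c • x) α • α = (RingHom.id ℤ) c • (x + BL x α • α)
    rw [h]; simp only [RingHom.id_apply]; module

lemma reflE_mem (α : L6) (h2 : BL α α = -2) (hK : BL α KL = 0) : reflE α h2 ∈ W5 :=
  Subgroup.subset_closure ⟨α, ⟨h2, hK⟩, fun _ => rfl⟩

lemma quadp (t : ℤ) : 0 ≤ t*t - t := by
  rcases le_or_gt t 0 with h | h <;> nlinarith

lemma quadn (t : ℤ) : 0 ≤ t*t + t := by
  rcases le_or_gt t (-1) with h | h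
  · nlinarith
  · have : 0 ≤ t := by omega
    nlinarith

lemma dichP (x y z u w : ℤ)
    (h0 : (x*x - x) + (y*y - y) + (z*z - z) + (u*u - u) + (w*w - w) = 0) :
    x = 0 ∨ x = 1 := by
  have hx : x*x - x = 0 :=
    le_antisymm (by linarith [quadp y, quadp z, quadp u, quadp w]) (quadp x)
  have : x * (x - 1) = 0 := by linarith [mul_sub x x 1, mul_one x]
  rcases mul_eq_zero.mp this with h | h
  · left; exact h
  · right; omega

lemma dichN (x y z u w : ℤ)
    (h0 : (x*x + x) + (y*y + y) + (z*z + z) + (u*u + u) + (w*w + w) = 0) :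
    x = -1 ∨ x = 0 := by
  have hx : x*x + x = 0 :=
    le_antisymm (by linarith [quadn y, quadn z, quadn u, quadn w]) (quadn x)
  have : x * (x + 1) = 0 := by linarith [mul_add x x 1, mul_one x]
  rcases mul_eq_zero.mp this with h | h
  · right; exact h
  · left; omega

lemma classes_eq : minusOneClasses = (clsList.toFinset : Set L6) := by
  ext v
  constructor
  · rintro ⟨h1, h2⟩
    obtain ⟨a, b, c, d, e, f, rfl⟩ : ∃ a b c d e f, v = ![a,b,c,d,e,f] :=
      ⟨v 0, v 1, v 2, v 3, v 4, v 5, by funext i; fin_cases i <;> rfl⟩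
    have h1' : a * a - b * b - c * c - d * d - e * e - f * f = -1 := h1
    have h2' : a * (-3) - b * 1 - c * 1 - d * 1 - e * 1 - f * 1 = -1 := h2
    have hs : b + c + d + e + f = 1 - 3*a := by linarith
    have hq : b*b + c*c + d*d + e*e + f*f = a*a + 1 := by linarith
    have key : (b+c+d+e+f)*(b+c+d+e+f) ≤ 5*(b*b+c*c+d*d+e*e+f*f) := by
      nlinarith [sq_nonneg (b-c), sq_nonneg (b-d), sq_nonneg (b-e), sq_nonneg (b-f),
        sq_nonneg (c-d), sq_nonneg (c-e), sq_nonneg (c-f),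
        sq_nonneg (d-e), sq_nonneg (d-f), sq_nonneg (e-f)]
    have ha0 : 0 ≤ a := by
      by_contra h
      have ha : a ≤ -1 := by omega
      nlinarith [key, mul_nonneg (by linarith : (0:ℤ) ≤ -a) (by linarith : (0:ℤ) ≤ -a-1)]
    have ha2 : a ≤ 2 := by
      by_contra h
      have ha : 3 ≤ a := by omega
      nlinarith [key, mul_nonneg (by linarith : (0:ℤ) ≤ a-3) (by linarith : (0:ℤ) ≤ a)]
    simp only [Finset.mem_coe, List.mem_toFinset]
    interval_cases a
    · -- sum = 1, sumsq = 1
      have h0 : (b*b - b) + (c*c - c) + (d*d - d) + (e*e - e) + (f*f - f) = 0 := by linarith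
      have hb := dichP b c d e f (by linarith)
      have hc := dichP c b d e f (by linarith)
      have hd := dichP d b c e f (by linarith)
      have he := dichP e b c d f (by linarith)
      have hf := dichP f b c d e (by linarith)
      rcases hb with rfl | rfl <;> rcases hc with rfl | rfl <;> rcases hd with rfl | rfl <;>
        rcases he with rfl | rfl <;> rcases hf with rfl | rfl <;>
        first | (exfalso; omega) | decide
    · have h0 : (b*b + b) + (c*c + c) + (d*d + d) + (e*e + e) + (f*f + f) = 0 := by linarith
      have hb := dichN b c d e f (by linarith)
      have hc := dichN c b d e f (by linarith)
      have hd := dichN d b c e f (by linarith)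
      have he := dichN e b c d f (by linarith)
      have hf := dichN f b c d e (by linarith)
      rcases hb with rfl | rfl <;> rcases hc with rfl | rfl <;> rcases hd with rfl | rfl <;>
        rcases he with rfl | rfl <;> rcases hf with rfl | rfl <;>
        first | (exfalso; omega) | decide
    · have h0 : (b*b + b) + (c*c + c) + (d*d + d) + (e*e + e) + (f*f + f) = 0 := by linarith
      have hb := dichN b c d e f (by linarith)
      have hc := dichN c b d e f (by linarith)
      have hd := dichN d b c e f (by linarith)
      have he := dichN e b c d f (by linarith)
      have hf := dichN f b c d e (by linarith)
      rcases hb with rfl | rfl <;> rcases hc with rfl | rfl <;> rcases hd with rfl | rfl <;>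
        rcases he with rfl | rfl <;> rcases hf with rfl | rfl <;>
        first | (exfalso; omega) | decide
  · intro hv
    simp only [Finset.mem_coe] at hv
    fin_cases hv <;> exact ⟨by decide, by decide⟩

lemma to_e1 : ∀ v ∈ minusOneClasses, ∃ g ∈ W5, g v = ![0,1,0,0,0,0] := by
  intro v hv
  rw [classes_eq] at hv
  simp only [Finset.mem_coe] at hv
  fin_cases hv
  · exact ⟨1, one_mem _, by decide⟩
  · exact ⟨reflE ![0,1,-1,0,0,0] (by decide), reflE_mem ![0,1,-1,0,0,0] (by decide) (by decide), by decide⟩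
  · exact ⟨reflE ![0,1,0,-1,0,0] (by decide), reflE_mem ![0,1,0,-1,0,0] (by decide) (by decide), by decide⟩
  · exact ⟨reflE ![0,1,0,0,-1,0] (by decide), reflE_mem ![0,1,0,0,-1,0] (by decide) (by decide), by decide⟩
  · exact ⟨reflE ![0,1,0,0,0,-1] (by decide), reflE_mem ![0,1,0,0,0,-1] (by decide) (by decide), by decide⟩
  · exact ⟨reflE ![0,1,0,-1,0,0] (by decide) * reflE ![1,-1,-1,-1,0,0] (by decide), mul_mem (reflE_mem ![0,1,0,-1,0,0] (by decide) (by decide)) (reflE_mem ![1,-1,-1,-1,0,0] (by decide) (by decide)), by decide⟩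
  · exact ⟨reflE ![0,1,-1,0,0,0] (by decide) * reflE ![1,-1,-1,-1,0,0] (by decide), mul_mem (reflE_mem ![0,1,-1,0,0,0] (by decide) (by decide)) (reflE_mem ![1,-1,-1,-1,0,0] (by decide) (by decide)), by decide⟩
  · exact ⟨reflE ![0,1,-1,0,0,0] (by decide) * reflE ![1,-1,-1,0,-1,0] (by decide), mul_mem (reflE_mem ![0,1,-1,0,0,0] (by decide) (by decide)) (reflE_mem ![1,-1,-1,0,-1,0] (by decide) (by decide)), by decide⟩
  · exact ⟨reflE ![0,1,-1,0,0,0] (by decide) * reflE ![1,-1,-1,0,0,-1] (by decide), mul_mem (reflE_mem ![0,1,-1,0,0,0] (by decide) (by decide)) (reflE_mem ![1,-1,-1,0,0,-1] (by decide) (by decide)), by decide⟩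
  · exact ⟨reflE ![1,-1,-1,-1,0,0] (by decide), reflE_mem ![1,-1,-1,-1,0,0] (by decide) (by decide), by decide⟩
  · exact ⟨reflE ![1,-1,-1,0,-1,0] (by decide), reflE_mem ![1,-1,-1,0,-1,0] (by decide) (by decide), by decide⟩
  · exact ⟨reflE ![1,-1,-1,0,0,-1] (by decide), reflE_mem ![1,-1,-1,0,0,-1] (by decide) (by decide), by decide⟩
  · exact ⟨reflE ![1,-1,0,-1,-1,0] (by decide), reflE_mem ![1,-1,0,-1,-1,0] (by decide) (by decide), by decide⟩
  · exact ⟨reflE ![1,-1,0,-1,0,-1] (by decide), reflE_mem ![1,-1,0,-1,0,-1] (by decide) (by decide), by decide⟩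
  · exact ⟨reflE ![1,-1,0,0,-1,-1] (by decide), reflE_mem ![1,-1,0,0,-1,-1] (by decide) (by decide), by decide⟩
  · exact ⟨reflE ![0,1,0,-1,0,0] (by decide) * reflE ![1,-1,-1,-1,0,0] (by decide) * reflE ![1,0,0,-1,-1,-1] (by decide), mul_mem (mul_mem (reflE_mem ![0,1,0,-1,0,0] (by decide) (by decide)) (reflE_mem ![1,-1,-1,-1,0,0] (by decide) (by decide))) (reflE_mem ![1,0,0,-1,-1,-1] (by decide) (by decide)), by decide⟩

theorem minusOne_classes_card_and_transitive :
    minusOneClasses.ncard = 16 ∧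
    ∀ v ∈ minusOneClasses, ∀ w ∈ minusOneClasses, ∃ g ∈ W5, g v = w := by
  constructor
  · rw [classes_eq, Set.ncard_coe_finset]
    decide
  · intro v hv w hw
    obtain ⟨g, hg, hgv⟩ := to_e1 v hv
    obtain ⟨h, hh, hhw⟩ := to_e1 w hw
    exact ⟨h⁻¹ * g, mul_mem (inv_mem hh) hg, by
      show (h⁻¹ * g : L6 ≃ₗ[ℤ] L6) v = w
      have : (h⁻¹ * g : L6 ≃ₗ[ℤ] L6) v = h⁻¹ (g v) := rfl
      rw [this, hgv, ← hhw]
      exact h.symm_apply_apply w⟩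
end

section
/- Let T be a nontrivial finite subgroup of ℂˣ × ℂˣ that is stable under both automorphisms s : (a,b) ↦ (b,a) and ι₁ : (a,b) ↦ (a⁻¹,b), and let n be the exponent of T. Then either T = {(a,b) ∈ ℂˣ×ℂˣ : aⁿ = 1 and bⁿ = 1} (isomorphic to Cₙ × Cₙ), or n is even and T = {(a,b) ∈ ℂˣ×ℂˣ : aⁿ = 1, bⁿ = 1 and (a·b⁻¹)^{n/2} = 1}, which equals the subgroup generated by (ζₙ,ζₙ) and (ζₙ²,1) for any primitive n-th root of unity ζₙ and is isomorphic to Cₙ × C_{n/2}. -/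
open Subgroup

lemma prod_zpow_fst {G H : Type*} [Group G] [Group H] (p : G × H) (l : ℤ) :
    (p ^ l).1 = p.1 ^ l := by
  cases l with
  | ofNat k => simp [zpow_natCast, Prod.pow_fst]
  | negSucc k => simp [zpow_negSucc, Prod.pow_fst]

lemma prod_zpow_snd {G H : Type*} [Group G] [Group H] (p : G × H) (l : ℤ) :
    (p ^ l).2 = p.2 ^ l := by
  cases l with
  | ofNat k => simp [zpow_natCast, Prod.pow_snd]
  | negSucc k => simp [zpow_negSucc, Prod.pow_snd]

lemma exists_pow_eq {ζ a : ℂˣ} {m : ℕ} (hm : m ≠ 0) (hζ : IsPrimitiveRoot ζ m)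
    (ha : a ^ m = 1) : ∃ i : ℕ, ζ ^ i = a := by
  haveI : NeZero m := ⟨hm⟩
  have hζC : IsPrimitiveRoot ((ζ : ℂˣ) : ℂ) m := IsPrimitiveRoot.coe_units_iff.mpr hζ
  have haC : ((a : ℂˣ) : ℂ) ^ m = 1 := by
    have := congrArg Units.val ha
    push_cast at this
    exact this
  obtain ⟨i, _, hi⟩ := hζC.eq_pow_of_pow_eq_one haC
  exact ⟨i, Units.ext (by push_cast; exact hi)⟩

lemma aux_iso {G : Type*} [CommGroup G] (T : Subgroup G) (x y : G) (N M : ℕ)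
    (hN : N ≠ 0) (hM : M ≠ 0)
    (hx : ∀ l : ℤ, x ^ l = 1 ↔ (N : ℤ) ∣ l) (hy : ∀ l : ℤ, y ^ l = 1 ↔ (M : ℤ) ∣ l)
    (hT : T = Subgroup.closure {x, y})
    (htriv : ∀ i j : ℤ, x ^ i = y ^ j → x ^ i = 1) :
    Nonempty (T ≃* Multiplicative (ZMod N × ZMod M)) := by
  haveI : NeZero N := ⟨hN⟩
  haveI : NeZero M := ⟨hM⟩
  have key : ∀ (z : G) (K : ℕ), K ≠ 0 → (∀ l : ℤ, z ^ l = 1 ↔ (K : ℤ) ∣ l) →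
      ∀ m : ℤ, z ^ (((m : ZMod K).val : ℤ)) = z ^ m := by
    intro z K hK hz m
    haveI : NeZero K := ⟨hK⟩
    have hdvd : (K : ℤ) ∣ ((m : ZMod K).val : ℤ) - m := by
      have h0 : ((((m : ZMod K).val : ℤ) - m : ℤ) : ZMod K) = 0 := by
        push_cast
        simp [ZMod.natCast_val, ZMod.cast_id]
      exact (ZMod.intCast_zmod_eq_zero_iff_dvd _ _).mp h0
    have h1 := (hz _).mpr hdvd
    rw [zpow_sub, mul_inv_eq_one] at h1
    exact h1
  let F : Multiplicative (ZMod N × ZMod M) →* G :=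
    { toFun := fun p => x ^ ((p.toAdd.1.val : ℤ)) * y ^ ((p.toAdd.2.val : ℤ))
      map_one' := by simp
      map_mul' := by
        intro p q
        show x ^ (((p.toAdd.1 + q.toAdd.1).val : ℤ)) * y ^ (((p.toAdd.2 + q.toAdd.2).val : ℤ)) = _
        have e1 : ((p.toAdd.1.val + q.toAdd.1.val : ℤ) : ZMod N) = p.toAdd.1 + q.toAdd.1 := by
          push_cast
          simp [ZMod.natCast_val, ZMod.cast_id]
        have e2 : ((p.toAdd.2.val + q.toAdd.2.val : ℤ) : ZMod M) = p.toAdd.2 + q.toAdd.2 := by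
          push_cast
          simp [ZMod.natCast_val, ZMod.cast_id]
        rw [← e1, ← e2, key x N hN hx, key y M hM hy, zpow_add, zpow_add]
        exact mul_mul_mul_comm _ _ _ _ }
  have hinj : Function.Injective F := by
    rw [injective_iff_map_eq_one]
    intro p hp
    have hp' : x ^ ((p.toAdd.1.val : ℤ)) * y ^ ((p.toAdd.2.val : ℤ)) = 1 := hp
    have hx1 : x ^ ((p.toAdd.1.val : ℤ)) = y ^ (-(p.toAdd.2.val : ℤ)) := by
      rw [zpow_neg]
      exact eq_inv_of_mul_eq_one_left hp'
    have hx2 := htriv _ _ hx1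
    have hy2 : y ^ (-(p.toAdd.2.val : ℤ)) = 1 := by rw [← hx1]; exact hx2
    have hNd : (N : ℤ) ∣ (p.toAdd.1.val : ℤ) := (hx _).mp hx2
    have hMd : (M : ℤ) ∣ (p.toAdd.2.val : ℤ) := (Int.dvd_neg).mp ((hy _).mp hy2)
    have h1 : p.toAdd.1 = 0 := by
      rw [← ZMod.val_eq_zero]
      exact Nat.eq_zero_of_dvd_of_lt (Int.natCast_dvd_natCast.mp hNd) (ZMod.val_lt _)
    have h2 : p.toAdd.2 = 0 := by
      rw [← ZMod.val_eq_zero]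
      exact Nat.eq_zero_of_dvd_of_lt (Int.natCast_dvd_natCast.mp hMd) (ZMod.val_lt _)
    have hp0 : p.toAdd = 0 := Prod.ext h1 h2
    have := congrArg Multiplicative.ofAdd hp0
    simpa using this
  have hxT : x ∈ T := by rw [hT]; exact subset_closure (Set.mem_insert _ _)
  have hyT : y ∈ T := by rw [hT]; exact subset_closure (Set.mem_insert_of_mem _ rfl)
  have hrange : F.range = T := by
    apply le_antisymm
    · rintro g ⟨p, rfl⟩
      exact mul_mem (zpow_mem hxT _) (zpow_mem hyT _)
    · intro t ht
      rw [hT, Subgroup.mem_closure_pair] at ht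
      obtain ⟨m, k, hmk⟩ := ht
      refine ⟨Multiplicative.ofAdd ((m : ZMod N), (k : ZMod M)), ?_⟩
      have hF : F (Multiplicative.ofAdd ((m : ZMod N), (k : ZMod M))) = x ^ m * y ^ k := by
        show x ^ (((m : ZMod N).val : ℤ)) * y ^ (((k : ZMod M).val : ℤ)) = _
        rw [key x N hN hx, key y M hM hy]
      rw [hF, hmk]
  exact ⟨(MulEquiv.subgroupCongr hrange.symm).trans (MonoidHom.ofInjective hinj).symm⟩

theorem torus_invariant_subgroup_classification
    (T : Subgroup (ℂˣ × ℂˣ)) (hfin : Finite T) (hnt : T ≠ ⊥)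
    (hswap : ∀ p : ℂˣ × ℂˣ, p ∈ T → (p.2, p.1) ∈ T)
    (hinv : ∀ p : ℂˣ × ℂˣ, p ∈ T → (p.1⁻¹, p.2) ∈ T)
    (n : ℕ) (hn : n = Monoid.exponent T) :
    ((T : Set (ℂˣ × ℂˣ)) = {p : ℂˣ × ℂˣ | p.1 ^ n = 1 ∧ p.2 ^ n = 1} ∧
      Nonempty (T ≃* Multiplicative (ZMod n × ZMod n))) ∨
    (Even n ∧
      (T : Set (ℂˣ × ℂˣ)) =
        {p : ℂˣ × ℂˣ | p.1 ^ n = 1 ∧ p.2 ^ n = 1 ∧ (p.1 * p.2⁻¹) ^ (n / 2) = 1} ∧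
      (∀ ζ : ℂˣ, IsPrimitiveRoot ζ n →
        T = Subgroup.closure {((ζ, ζ) : ℂˣ × ℂˣ), ((ζ ^ 2, 1) : ℂˣ × ℂˣ)}) ∧
      Nonempty (T ≃* Multiplicative (ZMod n × ZMod (n / 2)))) := by
  haveI : Finite ↥T := hfin
  have hnpos : 0 < n := by
    rw [hn]
    exact Nat.pos_of_ne_zero Monoid.exponent_ne_zero_of_finite
  -- every element of T is killed by n
  have hpow : ∀ p : ℂˣ × ℂˣ, p ∈ T → p ^ n = 1 := by
    intro p hp
    have h1 : (⟨p, hp⟩ : T) ^ n = 1 := by rw [hn]; exact Monoid.pow_exponent_eq_one _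
    have := congrArg Subtype.val h1
    simpa using this
  have hpow1 : ∀ p : ℂˣ × ℂˣ, p ∈ T → p.1 ^ n = 1 := by
    intro p hp
    have := congrArg Prod.fst (hpow p hp)
    simpa [Prod.pow_fst] using this
  have hpow2 : ∀ p : ℂˣ × ℂˣ, p ∈ T → p.2 ^ n = 1 := by
    intro p hp
    have := congrArg Prod.snd (hpow p hp)
    simpa [Prod.pow_snd] using this
  -- the image of T under the first projection
  set A : Subgroup ℂˣ := T.map (MonoidHom.fst ℂˣ ℂˣ) with hAdef
  have hmemA : ∀ a : ℂˣ, a ∈ A ↔ ∃ b : ℂˣ, (a, b) ∈ T := by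
    intro a
    constructor
    · rintro ⟨p, hp, rfl⟩
      exact ⟨p.2, by simpa using hp⟩
    · rintro ⟨b, hb⟩
      exact ⟨(a, b), hb, rfl⟩
  haveI hAfin : Finite ↥A := by
    have h1 : (T : Set (ℂˣ × ℂˣ)).Finite := Set.toFinite _
    have h2 : (A : Set ℂˣ).Finite := by
      rw [hAdef, Subgroup.coe_map]
      exact h1.image _
    exact h2.to_subtype
  haveI : IsCyclic ↥A := subgroup_units_cyclic A
  -- exponent of A is n
  have hexpA : Monoid.exponent ↥A = n := by
    apply Nat.dvd_antisymm
    · apply Monoid.exponent_dvd_of_forall_pow_eq_one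
      intro g
      obtain ⟨b, hb⟩ := (hmemA (g : ℂˣ)).mp g.2
      have : (g : ℂˣ) ^ n = 1 := hpow1 (_, b) hb
      exact Subtype.ext (by simpa using this)
    · rw [hn]
      apply Monoid.exponent_dvd_of_forall_pow_eq_one
      rintro ⟨p, hp⟩
      have ha : p.1 ∈ A := (hmemA p.1).mpr ⟨p.2, by simpa using hp⟩
      have hb : p.2 ∈ A := (hmemA p.2).mpr ⟨p.1, hswap p hp⟩
      have h1 : p.1 ^ Monoid.exponent ↥A = 1 := by
        have := congrArg Subtype.val (Monoid.pow_exponent_eq_one (⟨p.1, ha⟩ : A))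
        simpa using this
      have h2 : p.2 ^ Monoid.exponent ↥A = 1 := by
        have := congrArg Subtype.val (Monoid.pow_exponent_eq_one (⟨p.2, hb⟩ : A))
        simpa using this
      exact Subtype.ext (Prod.ext (by simpa using h1) (by simpa using h2))
  -- generator of A is a primitive n-th root of unity
  obtain ⟨c, hc⟩ := IsCyclic.exists_generator (α := ↥A)
  have hordc : orderOf (c : ℂˣ) = n := by
    rw [orderOf_coe, ← hexpA]
    apply Nat.dvd_antisymm (Monoid.order_dvd_exponent c)
    apply Monoid.exponent_dvd_of_forall_pow_eq_one
    intro g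
    obtain ⟨k, rfl⟩ := hc g
    rw [← zpow_natCast, ← zpow_mul, mul_comm, zpow_mul, zpow_natCast, pow_orderOf_eq_one,
      one_zpow]
  have hprim : IsPrimitiveRoot ((c : ℂˣ)) n := hordc ▸ IsPrimitiveRoot.orderOf (c : ℂˣ)
  have hAfull : ∀ a : ℂˣ, a ^ n = 1 → ∃ b : ℂˣ, (a, b) ∈ T := by
    intro a ha
    obtain ⟨i, hi⟩ := exists_pow_eq hnpos.ne' hprim ha
    refine (hmemA a).mp ?_
    rw [← hi]
    exact pow_mem c.2 i
  have hsq : ∀ p : ℂˣ × ℂˣ, p ∈ T → ((p.1 ^ 2, 1) : ℂˣ × ℂˣ) ∈ T := by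
    intro p hp
    have h1 : ((p.1, p.2⁻¹) : ℂˣ × ℂˣ) ∈ T := hswap _ (hinv _ (hswap _ hp))
    have h2 := mul_mem hp h1
    have h3 : p * (p.1, p.2⁻¹) = ((p.1 ^ 2, 1) : ℂˣ × ℂˣ) := by
      ext <;> simp [Prod.mul_def, sq]
    rwa [h3] at h2
  by_cases hc1 : ∀ a : ℂˣ, a ^ n = 1 → ((a, 1) : ℂˣ × ℂˣ) ∈ T
  · left
    constructor
    · ext p
      constructor
      · intro hp
        exact ⟨hpow1 p hp, hpow2 p hp⟩
      · rintro ⟨h1, h2⟩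
        have ha : ((p.1, 1) : ℂˣ × ℂˣ) ∈ T := hc1 p.1 h1
        have hb : ((1, p.2) : ℂˣ × ℂˣ) ∈ T := hswap _ (hc1 p.2 h2)
        have hm := mul_mem ha hb
        have he : ((p.1, 1) : ℂˣ × ℂˣ) * (1, p.2) = p := by
          ext <;> simp
        rwa [he] at hm
    · set ζ₀ : ℂˣ := (c : ℂˣ) with hζ₀
      have hclos : T = Subgroup.closure {((ζ₀, 1) : ℂˣ × ℂˣ), ((1, ζ₀) : ℂˣ × ℂˣ)} := by
        apply le_antisymm
        · intro p hp
          obtain ⟨i, hi⟩ := exists_pow_eq hnpos.ne' hprim (hpow1 p hp)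
          obtain ⟨j, hj⟩ := exists_pow_eq hnpos.ne' hprim (hpow2 p hp)
          have hg1 : ((ζ₀, 1) : ℂˣ × ℂˣ) ∈
              Subgroup.closure {((ζ₀, 1) : ℂˣ × ℂˣ), ((1, ζ₀) : ℂˣ × ℂˣ)} :=
            Subgroup.subset_closure (Set.mem_insert _ _)
          have hg2 : ((1, ζ₀) : ℂˣ × ℂˣ) ∈
              Subgroup.closure {((ζ₀, 1) : ℂˣ × ℂˣ), ((1, ζ₀) : ℂˣ × ℂˣ)} :=
            Subgroup.subset_closure (Set.mem_insert_of_mem _ rfl)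
          have he : p = ((ζ₀, 1) : ℂˣ × ℂˣ) ^ i * ((1, ζ₀) : ℂˣ × ℂˣ) ^ j :=
            Prod.ext (by simp [Prod.pow_fst, Prod.pow_snd, hi])
              (by simp [Prod.pow_fst, Prod.pow_snd, hj])
          rw [he]
          exact mul_mem (pow_mem hg1 i) (pow_mem hg2 j)
        · rw [Subgroup.closure_le]
          rintro q hq
          simp only [Set.mem_insert_iff, Set.mem_singleton_iff] at hq
          rcases hq with rfl | rfl
          · exact hc1 ζ₀ hprim.pow_eq_one
          · exact hswap _ (hc1 ζ₀ hprim.pow_eq_one)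
      have hxiff : ∀ l : ℤ, ((ζ₀, 1) : ℂˣ × ℂˣ) ^ l = 1 ↔ (n : ℤ) ∣ l := by
        intro l
        rw [Prod.ext_iff]
        simp only [prod_zpow_fst, prod_zpow_snd, Prod.fst_one, Prod.snd_one, one_zpow,
          and_true]
        exact hprim.zpow_eq_one_iff_dvd l
      have hyiff : ∀ l : ℤ, ((1, ζ₀) : ℂˣ × ℂˣ) ^ l = 1 ↔ (n : ℤ) ∣ l := by
        intro l
        rw [Prod.ext_iff]
        simp only [prod_zpow_fst, prod_zpow_snd, Prod.fst_one, Prod.snd_one, one_zpow,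
          true_and]
        exact hprim.zpow_eq_one_iff_dvd l
      have htriv : ∀ i j : ℤ, ((ζ₀, 1) : ℂˣ × ℂˣ) ^ i = ((1, ζ₀) : ℂˣ × ℂˣ) ^ j →
          ((ζ₀, 1) : ℂˣ × ℂˣ) ^ i = 1 := by
        intro i j hij
        have h1 : ζ₀ ^ i = 1 := by
          have := congrArg Prod.fst hij
          simpa using this
        rw [Prod.ext_iff]
        simp [h1]
      exact aux_iso T _ _ n n hnpos.ne' hnpos.ne' hxiff hyiff hclos htriv
  · right
    push_neg at hc1
    obtain ⟨a₀, ha₀n, ha₀T⟩ := hc1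
    set ζ₀ : ℂˣ := (c : ℂˣ) with hζ₀
    have heven : Even n := by
      by_contra hodd
      rw [Nat.not_even_iff_odd] at hodd
      obtain ⟨m, hm⟩ := hodd
      apply ha₀T
      obtain ⟨b, hb⟩ := hAfull a₀ ha₀n
      have hsq' := hsq _ hb
      have he : ((a₀ ^ 2, (1 : ℂˣ)) : ℂˣ × ℂˣ) ^ (m + 1) = (a₀, 1) := by
        refine Prod.ext ?_ (by simp [Prod.pow_snd])
        simp only [Prod.pow_fst]
        rw [← pow_mul]
        have h21 : 2 * (m + 1) = n + 1 := by omega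
        rw [h21, pow_succ, ha₀n, one_mul]
      rw [← he]
      exact pow_mem hsq' _
    obtain ⟨k, hk⟩ := id heven
    have h2k : 2 * k = n := by omega
    have hkpos : 0 < k := by omega
    have hKsub : ∀ x : ℂˣ, x ^ k = 1 → ((x, 1) : ℂˣ × ℂˣ) ∈ T := by
      intro x hx
      have hxn : x ^ n = 1 := by rw [← h2k, mul_comm, pow_mul, hx, one_pow]
      obtain ⟨i, hi⟩ := exists_pow_eq hnpos.ne' hprim hxn
      have h1 : ζ₀ ^ (i * k) = 1 := by rw [pow_mul, hi, hx]
      have h2 : n ∣ i * k := hprim.dvd_of_pow_eq_one _ h1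
      have h3 : 2 ∣ i := by
        rw [← h2k] at h2
        exact (Nat.mul_dvd_mul_iff_right hkpos).mp h2
      obtain ⟨m, rfl⟩ := h3
      obtain ⟨b, hb⟩ := hAfull (ζ₀ ^ m)
        (by rw [← pow_mul, mul_comm, pow_mul, hprim.pow_eq_one, one_pow])
      have hs := hsq _ hb
      have he : ((ζ₀ ^ m) ^ 2 : ℂˣ) = x := by
        rw [← pow_mul, mul_comm m 2, hi]
      rwa [he] at hs
    have hneg : ∀ x : ℂˣ, x ^ n = 1 → x ^ k ≠ 1 → ((x : ℂ)) ^ k = -1 := by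
      intro x hxn hxk
      have h1 : ((x : ℂ) ^ k) * ((x : ℂ) ^ k) = 1 := by
        rw [← pow_add, ← hk]
        have hxnC := congrArg Units.val hxn
        push_cast at hxnC
        exact hxnC
      rcases mul_self_eq_one_iff.mp h1 with h | h
      · exact absurd (Units.ext (by push_cast; exact h)) hxk
      · exact h
    have hKsup : ∀ x : ℂˣ, ((x, 1) : ℂˣ × ℂˣ) ∈ T → x ^ k = 1 := by
      intro x hxT
      by_contra hxk
      have hxn : x ^ n = 1 := hpow1 _ hxT
      have ha₀k : a₀ ^ k ≠ 1 := fun h => ha₀T (hKsub a₀ h)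
      have h1 := hneg x hxn hxk
      have h2 := hneg a₀ ha₀n ha₀k
      have h3 : (x * a₀) ^ k = 1 := by
        apply Units.ext
        push_cast
        rw [mul_pow, h1, h2]
        norm_num
      have h4 := hKsub _ h3
      apply ha₀T
      have h5 := mul_mem (inv_mem hxT) h4
      have he : (((x, 1) : ℂˣ × ℂˣ))⁻¹ * (x * a₀, 1) = (a₀, 1) := by
        refine Prod.ext ?_ (by simp)
        simp [inv_mul_cancel_left]
      rwa [he] at h5
    have hdiff : ∀ p : ℂˣ × ℂˣ, p ∈ T → (p.1 * p.2⁻¹) ^ k = 1 := by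
      intro p hp
      by_cases h1 : p.1 ^ k = 1
      · have hp1 : ((p.1, 1) : ℂˣ × ℂˣ) ∈ T := hKsub _ h1
        have hp2 : ((1, p.2) : ℂˣ × ℂˣ) ∈ T := by
          have hm := mul_mem (inv_mem hp1) hp
          have he : (((p.1, 1) : ℂˣ × ℂˣ))⁻¹ * p = (1, p.2) := by
            refine Prod.ext (by simp) (by simp)
          rwa [he] at hm
        have h2 := hKsup _ (hswap _ hp2)
        rw [mul_pow, inv_pow, h1, h2, one_mul, inv_one]
      · have h2 : p.2 ^ k ≠ 1 := by
          intro h2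
          apply h1
          have hp2 : ((1, p.2) : ℂˣ × ℂˣ) ∈ T := hswap _ (hKsub _ h2)
          have hm := mul_mem hp (inv_mem hp2)
          have he : p * (((1, p.2) : ℂˣ × ℂˣ))⁻¹ = (p.1, 1) := by
            refine Prod.ext (by simp) (by simp)
          rw [he] at hm
          exact hKsup _ hm
        have e1 := hneg _ (hpow1 p hp) h1
        have e2 := hneg _ (hpow2 p hp) h2
        apply Units.ext
        push_cast
        rw [mul_pow, inv_pow, e1, e2]
        norm_num
    have hdiag : ∀ a : ℂˣ, a ^ n = 1 → ((a, a) : ℂˣ × ℂˣ) ∈ T := by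
      intro a ha
      obtain ⟨b, hb⟩ := hAfull a ha
      have h1 := hdiff _ hb
      have h2 := hKsub _ h1
      have h3 := hswap _ h2
      have hm := mul_mem hb h3
      have he : ((a, b) : ℂˣ × ℂˣ) * (1, a * b⁻¹) = (a, a) := by
        refine Prod.ext (by simp) ?_
        show b * (a * b⁻¹) = a
        rw [mul_comm b (a * b⁻¹), mul_assoc, inv_mul_cancel, mul_one]
      rwa [he] at hm
    have hn2 : n / 2 = k := by omega
    have hset2 : (T : Set (ℂˣ × ℂˣ)) =
        {p : ℂˣ × ℂˣ | p.1 ^ n = 1 ∧ p.2 ^ n = 1 ∧ (p.1 * p.2⁻¹) ^ (n / 2) = 1} := by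
      rw [hn2]
      ext p
      constructor
      · intro hp
        exact ⟨hpow1 p hp, hpow2 p hp, hdiff p hp⟩
      · rintro ⟨h1, h2, h3⟩
        have hd := hdiag _ h1
        have h4 := hKsub _ h3
        have h5 : ((((p.1 * p.2⁻¹) : ℂˣ)⁻¹, (1 : ℂˣ)) : ℂˣ × ℂˣ) ∈ T := by
          have hi4 := inv_mem h4
          have he : (((p.1 * p.2⁻¹, 1) : ℂˣ × ℂˣ))⁻¹ = ((p.1 * p.2⁻¹)⁻¹, 1) := by
            refine Prod.ext (by simp) (by simp)
          rwa [he] at hi4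
        have h6 := hswap _ h5
        have hm := mul_mem hd h6
        have he : ((p.1, p.1) : ℂˣ × ℂˣ) * (1, (p.1 * p.2⁻¹)⁻¹) = p := by
          refine Prod.ext (by simp) ?_
          show p.1 * (p.1 * p.2⁻¹)⁻¹ = p.2
          rw [mul_inv_rev, inv_inv, mul_comm p.2 p.1⁻¹, ← mul_assoc, mul_inv_cancel, one_mul]
        rwa [he] at hm
    have hclos2 : ∀ ζ : ℂˣ, IsPrimitiveRoot ζ n →
        T = Subgroup.closure {((ζ, ζ) : ℂˣ × ℂˣ), ((ζ ^ 2, 1) : ℂˣ × ℂˣ)} := by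
      intro ζ hζ
      have hk2 : IsPrimitiveRoot (ζ ^ 2) k := hζ.pow hnpos (by omega)
      apply le_antisymm
      · intro p hp
        obtain ⟨i, hi⟩ := exists_pow_eq hnpos.ne' hζ (hpow1 p hp)
        obtain ⟨m, hm⟩ := exists_pow_eq hkpos.ne' hk2 (hdiff p hp)
        have hg1 : ((ζ, ζ) : ℂˣ × ℂˣ) ∈
            Subgroup.closure {((ζ, ζ) : ℂˣ × ℂˣ), ((ζ ^ 2, 1) : ℂˣ × ℂˣ)} :=
          Subgroup.subset_closure (Set.mem_insert _ _)
        have hg2 : ((ζ ^ 2, 1) : ℂˣ × ℂˣ) ∈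
            Subgroup.closure {((ζ, ζ) : ℂˣ × ℂˣ), ((ζ ^ 2, 1) : ℂˣ × ℂˣ)} :=
          Subgroup.subset_closure (Set.mem_insert_of_mem _ rfl)
        have hg3 : ((1, ζ ^ 2) : ℂˣ × ℂˣ) ∈
            Subgroup.closure {((ζ, ζ) : ℂˣ × ℂˣ), ((ζ ^ 2, 1) : ℂˣ × ℂˣ)} := by
          have hm3 := mul_mem (mul_mem hg1 hg1) (inv_mem hg2)
          have he : ((ζ, ζ) : ℂˣ × ℂˣ) * (ζ, ζ) * (((ζ ^ 2, 1) : ℂˣ × ℂˣ))⁻¹ =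
              (1, ζ ^ 2) := by
            refine Prod.ext ?_ ?_
            · show ζ * ζ * (ζ ^ 2)⁻¹ = 1
              rw [← pow_two, mul_inv_cancel]
            · show ζ * ζ * 1⁻¹ = ζ ^ 2
              rw [inv_one, mul_one, pow_two]
          rwa [he] at hm3
        have hp2 : p.2 = ζ ^ i * ((ζ ^ 2) ^ m)⁻¹ := by
          rw [hi, hm, mul_inv_rev, inv_inv, mul_comm p.2 p.1⁻¹, ← mul_assoc,
            mul_inv_cancel, one_mul]
        have he : p = ((ζ, ζ) : ℂˣ × ℂˣ) ^ i * (((1, ζ ^ 2) : ℂˣ × ℂˣ) ^ m)⁻¹ := by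
          refine Prod.ext ?_ ?_
          · simp [Prod.pow_fst, Prod.pow_snd, hi]
          · simp [Prod.pow_fst, Prod.pow_snd, hp2]
        rw [he]
        exact mul_mem (pow_mem hg1 i) (inv_mem (pow_mem hg3 m))
      · rw [Subgroup.closure_le]
        rintro q hq
        simp only [Set.mem_insert_iff, Set.mem_singleton_iff] at hq
        rcases hq with rfl | rfl
        · exact hdiag ζ hζ.pow_eq_one
        · apply hKsub
          rw [← pow_mul, h2k]
          exact hζ.pow_eq_one
    have hxiff2 : ∀ l : ℤ, ((ζ₀, ζ₀) : ℂˣ × ℂˣ) ^ l = 1 ↔ (n : ℤ) ∣ l := by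
      intro l
      rw [Prod.ext_iff]
      simp only [prod_zpow_fst, prod_zpow_snd, Prod.fst_one, Prod.snd_one, and_self]
      exact hprim.zpow_eq_one_iff_dvd l
    have hyiff2 : ∀ l : ℤ, ((ζ₀ ^ 2, 1) : ℂˣ × ℂˣ) ^ l = 1 ↔ (k : ℤ) ∣ l := by
      intro l
      rw [Prod.ext_iff]
      simp only [prod_zpow_fst, prod_zpow_snd, Prod.fst_one, Prod.snd_one, one_zpow, and_true]
      rw [← zpow_natCast ζ₀ 2, ← zpow_mul, hprim.zpow_eq_one_iff_dvd]
      have hnk : (n : ℤ) = 2 * (k : ℤ) := by exact_mod_cast h2k.symm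
      rw [hnk]
      push_cast
      exact mul_dvd_mul_iff_left (two_ne_zero)
    have htriv2 : ∀ i j : ℤ, ((ζ₀, ζ₀) : ℂˣ × ℂˣ) ^ i = ((ζ₀ ^ 2, 1) : ℂˣ × ℂˣ) ^ j →
        ((ζ₀, ζ₀) : ℂˣ × ℂˣ) ^ i = 1 := by
      intro i j hij
      have h1 : ζ₀ ^ i = 1 := by
        have := congrArg Prod.snd hij
        simpa [prod_zpow_snd] using this
      rw [Prod.ext_iff]
      simp [prod_zpow_fst, prod_zpow_snd, h1]
    refine ⟨heven, hset2, hclos2, ?_⟩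
    rw [hn2]
    exact aux_iso T _ _ n k hnpos.ne' hkpos.ne' hxiff2 hyiff2 (hclos2 ζ₀ hprim) htriv2
end

section
/- The following identities hold in ℂ[x₁,x₂,y₁,y₂]. For every ζ ∈ ℂ with ζⁿ = 1: r₁(ζx₁,x₂,ζy₁,y₂) = ζ·r₁(x₁,x₂,y₁,y₂), r₂(ζx₁,x₂,ζy₁,y₂) = r₂(x₁,x₂,y₁,y₂), t₁(ζx₁,x₂,ζy₁,y₂) = ζ·t₁(x₁,x₂,y₁,y₂), and t₂(ζx₁,x₂,ζy₁,y₂) = t₂(x₁,x₂,y₁,y₂). Moreover r₁(x₂,x₁,y₂,y₁) = −t₂(x₁,x₂,y₁,y₂), r₂(x₂,x₁,y₂,y₁) = −t₁(x₁,x₂,y₁,y₂), t₁(x₂,x₁,y₂,y₁) = −r₂(x₁,x₂,y₁,y₂), t₂(x₂,x₁,y₂,y₁) = −r₁(x₁,x₂,y₁,y₂); and r₁(y₁,y₂,x₁,x₂) = t₁(x₁,x₂,y₁,y₂), r₂(y₁,y₂,x₁,x₂) = t₂(x₁,x₂,y₁,y₂), t₁(y₁,y₂,x₁,x₂) = r₁(x₁,x₂,y₁,y₂),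 t₂(y₁,y₂,x₁,x₂) = r₂(x₁,x₂,y₁,y₂). (These identities express that the birational self-map ([x₁:x₂],[y₁:y₂]) ↦ ([r₁:r₂],[t₁:t₂]) of ℙ¹×ℙ¹ normalizes the group G ≅ C₂×Dₙ generated by t : (x,y) ↦ (ζₙx,ζₙy), σ : (x,y) ↦ (1/x,1/y) and s : (x,y) ↦ (y,x), inducing on G the outer automorphism t ↦ t, s ↦ s, σ ↦ σ·s, which does not come from any biregular automorphism normalizing G.) -/
noncomputable section

open MvPolynomial

/-- The polynomial ring ℂ[x₁,x₂,y₁,y₂], with x₁ = X 0, x₂ = X 1, y₁ = X 2, y₂ = X 3. -/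
abbrev RP : Type := MvPolynomial (Fin 4) ℂ

/-- m = (n+1)/2. -/
def mm (n : ℕ) : ℕ := (n + 1) / 2

/-- r₁ = x₂^m · y₁ · y₂^{m−1} − x₁^m · y₁^m. -/
def r1 (n : ℕ) : RP := X 1 ^ mm n * X 2 * X 3 ^ (mm n - 1) - X 0 ^ mm n * X 2 ^ mm n

/-- r₂ = x₂^m · y₂^m − x₁^{m−1} · x₂ · y₁^m. -/
def r2 (n : ℕ) : RP := X 1 ^ mm n * X 3 ^ mm n - X 0 ^ (mm n - 1) * X 1 * X 2 ^ mm n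

/-- t₁ = x₁ · x₂^{m−1} · y₂^m − x₁^m · y₁^m. -/
def t1 (n : ℕ) : RP := X 0 * X 1 ^ (mm n - 1) * X 3 ^ mm n - X 0 ^ mm n * X 2 ^ mm n

/-- t₂ = x₂^m · y₂^m − x₁^m · y₁^{m−1} · y₂. -/
def t2 (n : ℕ) : RP := X 1 ^ mm n * X 3 ^ mm n - X 0 ^ mm n * X 2 ^ (mm n - 1) * X 3

/-- Substitution (x₁,x₂,y₁,y₂) ↦ (ζx₁,x₂,ζy₁,y₂). -/
def scaleXY (ζ : ℂ) : RP →ₐ[ℂ] RP := aeval ![C ζ * X 0, X 1, C ζ * X 2, X 3]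

/-- Substitution (x₁,x₂,y₁,y₂) ↦ (x₂,x₁,y₂,y₁). -/
def swapXY : RP →ₐ[ℂ] RP := aeval ![X 1, X 0, X 3, X 2]

/-- Substitution (x₁,x₂,y₁,y₂) ↦ (y₁,y₂,x₁,x₂). -/
def swapPairs : RP →ₐ[ℂ] RP := aeval ![X 2, X 3, X 0, X 1]

/-!
STATEMENT 10: the equivariance identities for the polynomials r₁, r₂, t₁, t₂
(for odd n ≥ 3, m = (n+1)/2).
-/
theorem equivariance_of_quadric_involution_polynomials
    (n : ℕ) (hodd : Odd n) (h3 : 3 ≤ n) :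
    (∀ ζ : ℂ, ζ ^ n = 1 →
      scaleXY ζ (r1 n) = C ζ * r1 n ∧
      scaleXY ζ (r2 n) = r2 n ∧
      scaleXY ζ (t1 n) = C ζ * t1 n ∧
      scaleXY ζ (t2 n) = t2 n) ∧
    swapXY (r1 n) = - t2 n ∧
    swapXY (r2 n) = - t1 n ∧
    swapXY (t1 n) = - r2 n ∧
    swapXY (t2 n) = - r1 n ∧
    swapPairs (r1 n) = t1 n ∧
    swapPairs (r2 n) = t2 n ∧
    swapPairs (t1 n) = r1 n ∧
    swapPairs (t2 n) = r2 n := by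

  obtain ⟨k, hk⟩ := hodd
  have hm : mm n = k + 1 := by subst hk; simp only [mm]; omega
  have hm' : mm n - 1 = k := by omega
  have hζC : ∀ ζ : ℂ, ζ ^ n = 1 → ((C ζ : RP)) ^ (2 * k + 2) = C ζ := by
    intro ζ hζ
    rw [← map_pow]
    congr 1
    have : ζ ^ (2 * k + 2) = ζ ^ n * ζ := by rw [hk]; ring
    rw [this, hζ, one_mul]
  refine ⟨?_, ?_, ?_, ?_, ?_, ?_, ?_, ?_, ?_⟩
  · intro ζ hζ
    have h2 := hζC ζ hζ
    have h1 : ((C ζ : RP)) ^ (2 * k + 1) = 1 := by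
      rw [← map_pow, ← hk, hζ, map_one]
    refine ⟨?_, ?_, ?_, ?_⟩ <;>
      simp only [scaleXY, r1, r2, t1, t2, hm, hm', Nat.add_sub_cancel, map_sub, map_mul, map_pow, aeval_X,
        Matrix.cons_val_zero, Matrix.cons_val_one, Matrix.head_cons,
        Matrix.cons_val_two, Matrix.tail_cons, Matrix.cons_val_three, Matrix.head_fin_const]
    · linear_combination (-(X 0 ^ (k + 1) * X 2 ^ (k + 1)) : RP) * h2
    · linear_combination (-(X 0 ^ k * X 1 * X 2 ^ (k + 1)) : RP) * h1
    · linear_combination (-(X 0 ^ (k + 1) * X 2 ^ (k + 1)) : RP) * h2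
    · linear_combination (-(X 0 ^ (k + 1) * X 2 ^ k * X 3) : RP) * h1
  all_goals
    simp only [swapXY, swapPairs, r1, r2, t1, t2, hm, hm', Nat.add_sub_cancel, map_sub, map_mul, map_pow, aeval_X,
      Matrix.cons_val_zero, Matrix.cons_val_one, Matrix.head_cons,
      Matrix.cons_val_two, Matrix.tail_cons, Matrix.cons_val_three, Matrix.head_fin_const]
    ring


end
end

section
/- Let G be the subgroup of P generated by (x,y) ↦ (−x,−y) and (x,y) ↦ (1/y,x), and let G' be the subgroup of P generated by (x,y) ↦ (1/x,1/y) and (x,y) ↦ (y,−x). Then G and G' are both isomorphic to C₂ × C₄, and there exists h ∈ P with h·G·h⁻¹ = G'. -/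
noncomputable section

/-- GL₂(ℂ). -/
abbrev GL2 : Type := Matrix.GeneralLinearGroup (Fin 2) ℂ

/-- PGL₂(ℂ) = GL₂(ℂ) modulo its center. -/
abbrev PGL2 : Type := GL2 ⧸ Subgroup.center GL2

/-- The class in PGL₂(ℂ) of a 2×2 matrix of nonzero determinant, acting as the
corresponding Möbius transformation x ↦ (ax+b)/(cx+d). -/
def pg (A : Matrix (Fin 2) (Fin 2) ℂ) (h : A.det ≠ 0) : PGL2 :=
  QuotientGroup.mk (Matrix.GeneralLinearGroup.mkOfDetNeZero A h)

/-- PGL₂(ℂ) × PGL₂(ℂ). -/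
abbrev Gp : Type := PGL2 × PGL2

/-- The swap automorphism of PGL₂(ℂ) × PGL₂(ℂ). -/
def swapAut : MulAut Gp := MulEquiv.prodComm

lemma swapAut_sq : swapAut * swapAut = 1 := by
  ext p
  · simp [swapAut, MulAut.mul_apply, MulAut.one_apply]
  · simp [swapAut, MulAut.mul_apply, MulAut.one_apply]

/-- The action of C₂ (realized as ℤˣ) on PGL₂(ℂ) × PGL₂(ℂ) whose generator swaps
the two factors. -/
def phiP : ℤˣ →* MulAut Gp where
  toFun u := if u = 1 then 1 else swapAut
  map_one' := if_pos rfl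
  map_mul' := by
    intro a b
    have h1 : (-1 : ℤˣ) ≠ 1 := by decide
    rcases Int.units_eq_one_or a with ha | ha <;> rcases Int.units_eq_one_or b with hb | hb <;>
      subst ha <;> subst hb <;>
      simp [h1, swapAut_sq]

/-- P = (PGL₂(ℂ) × PGL₂(ℂ)) ⋊ C₂, the automorphism group of ℙ¹×ℙ¹: an element
⟨(g₁,g₂), ε⟩ acts on (x,y) by first swapping the coordinates if ε = −1 and then applying
the Möbius transformations g₁, g₂ on the two factors. -/
abbrev P : Type := SemidirectProduct Gp ℤˣ phiP

/-- The coordinate swap (x,y) ↦ (y,x). -/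
def σP : P := SemidirectProduct.inr (-1 : ℤˣ)

/-- The element of P acting coordinatewise by a pair of Möbius transformations. -/
def pl (g : Gp) : P := SemidirectProduct.inl g

/-- The Möbius transformation x ↦ −x. -/
def mNeg : PGL2 := pg !![(-1 : ℂ), 0; 0, 1] (by norm_num [Matrix.det_fin_two_of])

/-- The Möbius transformation x ↦ 1/x. -/
def mInv : PGL2 := pg !![(0 : ℂ), 1; 1, 0] (by norm_num [Matrix.det_fin_two_of])

/-- The Möbius transformation x ↦ ζ₄·x, for the primitive 4th root of unity ζ₄ = i. -/
def mI : PGL2 := pg !![Complex.I, 0; 0, 1]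
  (by simp [Matrix.det_fin_two_of, Complex.I_ne_zero])

/-- The Möbius transformation x ↦ (x−1)/(x+1). -/
def mU : PGL2 := pg !![(1 : ℂ), -1; 1, 1] (by norm_num [Matrix.det_fin_two_of])

/-- G = ⟨(x,y) ↦ (−x,−y), (x,y) ↦ (1/y, x)⟩. -/
def G12 : Subgroup P := Subgroup.closure {pl (mNeg, mNeg), pl (mInv, 1) * σP}

/-- G' = ⟨(x,y) ↦ (1/x,1/y), (x,y) ↦ (y, −x)⟩. -/
def G12' : Subgroup P := Subgroup.closure {pl (mInv, mInv), pl (1, mNeg) * σP}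

/-!
STATEMENT 12: G and G' are both isomorphic to C₂ × C₄, and there exists h ∈ P with
h·G·h⁻¹ = G'.
-/
lemma pg_coe (A : Matrix (Fin 2) (Fin 2) ℂ) (h : A.det ≠ 0) :
    ((Matrix.GeneralLinearGroup.mkOfDetNeZero A h : GL2) : Matrix (Fin 2) (Fin 2) ℂ) = A := rfl

lemma pg_mul (A B : Matrix (Fin 2) (Fin 2) ℂ) (hA : A.det ≠ 0) (hB : B.det ≠ 0) :
    pg A hA * pg B hB = pg (A * B) (by rw [Matrix.det_mul]; exact mul_ne_zero hA hB) := by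
  unfold pg
  rw [← QuotientGroup.mk_mul]
  congr 1
  exact Units.ext rfl

lemma pg_one : pg !![(1:ℂ),0;0,1] (by norm_num [Matrix.det_fin_two_of]) = 1 := by
  unfold pg
  have : Matrix.GeneralLinearGroup.mkOfDetNeZero !![(1:ℂ),0;0,1]
      (by norm_num [Matrix.det_fin_two_of]) = 1 := by
    apply Units.ext
    rw [pg_coe]
    simp [Matrix.one_fin_two]
  rw [this, QuotientGroup.mk_one]

-- scalar unit is central

lemma scalar_mem_center (c : ℂ) (hc : c ≠ 0) :
    Matrix.GeneralLinearGroup.mkOfDetNeZero (c • (1 : Matrix (Fin 2) (Fin 2) ℂ))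
      (by simp [Matrix.det_smul, hc]) ∈ Subgroup.center GL2 := by
  rw [Subgroup.mem_center_iff]
  intro g
  apply Units.ext
  show (g : Matrix (Fin 2) (Fin 2) ℂ) * (c • 1) = (c • 1) * (g : Matrix (Fin 2) (Fin 2) ℂ)
  rw [mul_smul_comm, smul_mul_assoc, mul_one, one_mul]

lemma pg_smul (A : Matrix (Fin 2) (Fin 2) ℂ) (c : ℂ) (hc : c ≠ 0) (hA : A.det ≠ 0)
    (h' : (c • A).det ≠ 0) : pg (c • A) h' = pg A hA := by
  unfold pg
  have key : Matrix.GeneralLinearGroup.mkOfDetNeZero (c • A) h' =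
      Matrix.GeneralLinearGroup.mkOfDetNeZero (c • (1 : Matrix (Fin 2) (Fin 2) ℂ))
        (by simp [Matrix.det_smul, hc]) * Matrix.GeneralLinearGroup.mkOfDetNeZero A hA := by
    apply Units.ext
    show c • A = (c • 1) * A
    rw [smul_mul_assoc, one_mul]
  rw [key, QuotientGroup.mk_mul, QuotientGroup.eq_one_iff _ |>.mpr (scalar_mem_center c hc), one_mul]

lemma pg_eq_imp {A B : Matrix (Fin 2) (Fin 2) ℂ} {hA : A.det ≠ 0} {hB : B.det ≠ 0}
    (h : pg A hA = pg B hB) : ∃ c : ℂ, B = c • A := by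
  unfold pg at h
  have hz := QuotientGroup.eq.mp h
  set uA := Matrix.GeneralLinearGroup.mkOfDetNeZero A hA with huA
  set uB := Matrix.GeneralLinearGroup.mkOfDetNeZero B hB with huB
  have hcomm := Subgroup.mem_center_iff.mp hz
  set z : GL2 := uA⁻¹ * uB with hzdef
  -- commutes with diag(-1,1) and antidiag(1,1)
  have hN : (z : Matrix (Fin 2) (Fin 2) ℂ) * !![(-1:ℂ),0;0,1] = !![(-1:ℂ),0;0,1] * z := by
    exact (congrArg Units.val (hcomm (Matrix.GeneralLinearGroup.mkOfDetNeZero !![(-1:ℂ),0;0,1]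
      (by norm_num [Matrix.det_fin_two_of])))).symm
  have hJ : (z : Matrix (Fin 2) (Fin 2) ℂ) * !![(0:ℂ),1;1,0] = !![(0:ℂ),1;1,0] * z := by
    exact (congrArg Units.val (hcomm (Matrix.GeneralLinearGroup.mkOfDetNeZero !![(0:ℂ),1;1,0]
      (by norm_num [Matrix.det_fin_two_of])))).symm
  set M : Matrix (Fin 2) (Fin 2) ℂ := (z : Matrix (Fin 2) (Fin 2) ℂ) with hM
  have e01 : M 0 1 = 0 := by
    have := Matrix.ext_iff.mpr hN 0 1
    simp [Matrix.mul_apply, Fin.sum_univ_two] at this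
    linear_combination this / 2
  have e10 : M 1 0 = 0 := by
    have := Matrix.ext_iff.mpr hN 1 0
    simp [Matrix.mul_apply, Fin.sum_univ_two] at this
    linear_combination -this / 2
  have e00 : M 0 0 = M 1 1 := by
    have := Matrix.ext_iff.mpr hJ 0 1
    simpa [Matrix.mul_apply, Fin.sum_univ_two] using this
  have hMs : M = (M 0 0) • 1 := by
    ext i j
    fin_cases i <;> fin_cases j <;>
      simp [Matrix.one_apply, e01, e10, ← e00]
  refine ⟨M 0 0, ?_⟩
  have h5 : A * M = B :=
    congrArg Units.val (show uA * z = uB by rw [hzdef, mul_inv_cancel_left])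
  rw [← h5]
  conv_lhs => rw [hMs]
  rw [mul_smul_comm, mul_one]

lemma pg_congr {A B : Matrix (Fin 2) (Fin 2) ℂ} {hA : A.det ≠ 0} (hAB : A = B) :
    pg A hA = pg B (hAB ▸ hA) := by subst hAB; rfl

lemma smul2 (c a b d e : ℂ) : c • !![a,b;d,e] = !![c*a,c*b;c*d,c*e] := by
  ext i j
  fin_cases i <;> fin_cases j <;> simp

lemma nn : mNeg * mNeg = 1 := by
  rw [mNeg, pg_mul, pg_congr (show !![(-1:ℂ),0;0,1] * !![(-1:ℂ),0;0,1] = !![(1:ℂ),0;0,1] by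
    norm_num [Matrix.mul_fin_two])]
  exact pg_one

lemma vv : mInv * mInv = 1 := by
  rw [mInv, pg_mul, pg_congr (show !![(0:ℂ),1;1,0] * !![(0:ℂ),1;1,0] = !![(1:ℂ),0;0,1] by
    norm_num [Matrix.mul_fin_two])]
  exact pg_one

lemma nv_comm : mNeg * mInv = mInv * mNeg := by
  rw [mNeg, mInv, pg_mul, pg_mul,
    pg_congr (show !![(-1:ℂ),0;0,1] * !![(0:ℂ),1;1,0] = !![(0:ℂ),-1;1,0] by
      norm_num [Matrix.mul_fin_two]),
    pg_congr (show !![(0:ℂ),1;1,0] * !![(-1:ℂ),0;0,1] = (-1 : ℂ) • !![(0:ℂ),-1;1,0] by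
      norm_num [Matrix.mul_fin_two, smul2])]
  rw [pg_smul _ (-1) (by norm_num) (by norm_num [Matrix.det_fin_two_of])]

lemma un : mU * mNeg = mInv * mU := by
  rw [mU, mNeg, mInv, pg_mul, pg_mul,
    pg_congr (show !![(1:ℂ),-1;1,1] * !![(-1:ℂ),0;0,1] = !![(-1:ℂ),-1;-1,1] by
      norm_num [Matrix.mul_fin_two]),
    pg_congr (show !![(0:ℂ),1;1,0] * !![(1:ℂ),-1;1,1] = (-1 : ℂ) • !![(-1:ℂ),-1;-1,1] by
      norm_num [Matrix.mul_fin_two, smul2])]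
  rw [pg_smul _ (-1) (by norm_num) (by norm_num [Matrix.det_fin_two_of])]

lemma uv : mU * mInv = mNeg * mU := by
  rw [mU, mInv, mNeg, pg_mul, pg_mul,
    pg_congr (show !![(1:ℂ),-1;1,1] * !![(0:ℂ),1;1,0] = !![(-1:ℂ),1;1,1] by
      norm_num [Matrix.mul_fin_two]),
    pg_congr (show !![(-1:ℂ),0;0,1] * !![(1:ℂ),-1;1,1] = !![(-1:ℂ),1;1,1] by
      norm_num [Matrix.mul_fin_two])]

lemma n_ne_one : mNeg ≠ 1 := by
  intro h
  rw [mNeg, ← pg_one] at h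
  obtain ⟨c, hc⟩ := pg_eq_imp h
  have h00 := Matrix.ext_iff.mpr hc 0 0
  have h11 := Matrix.ext_iff.mpr hc 1 1
  simp at h00 h11
  rw [← h11] at h00
  norm_num at h00

lemma v_ne_one : mInv ≠ 1 := by
  intro h
  rw [mInv, ← pg_one] at h
  obtain ⟨c, hc⟩ := pg_eq_imp h
  have h00 := Matrix.ext_iff.mpr hc 0 0
  simp at h00

lemma n_ne_v : mNeg ≠ mInv := by
  intro h
  rw [mNeg, mInv] at h
  obtain ⟨c, hc⟩ := pg_eq_imp h
  have h01 := Matrix.ext_iff.mpr hc 0 1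
  simp at h01

lemma phi_neg : phiP (-1 : ℤˣ) = swapAut := by
  show (if ((-1 : ℤˣ) = 1) then 1 else swapAut) = swapAut
  rw [if_neg (by decide)]

lemma pl_mul (g h : Gp) : pl g * pl h = pl (g * h) := (map_mul SemidirectProduct.inl g h).symm

lemma pl_one : pl 1 = 1 := map_one SemidirectProduct.inl

lemma pl_inv (g : Gp) : (pl g)⁻¹ = pl g⁻¹ := (map_inv SemidirectProduct.inl g).symm

lemma sigma_sq : σP * σP = 1 := by
  rw [σP, ← map_mul]
  norm_num

lemma sigma_inv : σP⁻¹ = σP := by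
  rw [σP, ← map_inv]
  norm_num

lemma sigma_mul_pl (g : Gp) : σP * pl g = pl (swapAut g) * σP := by
  have h := SemidirectProduct.inl_aut (φ := phiP) (-1 : ℤˣ) g
  rw [phi_neg] at h
  show SemidirectProduct.inr (-1 : ℤˣ) * SemidirectProduct.inl g = _
  rw [pl, σP, h, show ((-1:ℤˣ)⁻¹) = (-1:ℤˣ) by decide, mul_assoc, ← map_mul]
  norm_num

lemma pl_injective : Function.Injective pl := SemidirectProduct.inl_injective

lemma rightHom_pl (g : Gp) : SemidirectProduct.rightHom (pl g) = 1 :=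
  SemidirectProduct.rightHom_inl g

lemma rightHom_sigma : SemidirectProduct.rightHom σP = (-1 : ℤˣ) :=
  SemidirectProduct.rightHom_inr _

-- the generic C2 x C4 lemma

lemma closure_iso {Γ : Type} [Group Γ] (a b : Γ) (ha : a ^ 2 = 1) (hb : b ^ 4 = 1)
    (hcomm : a * b = b * a)
    (hinj : ∀ i < 2, ∀ j < 4, a ^ i * b ^ j = 1 → i = 0 ∧ j = 0) :
    Nonempty (Subgroup.closure {a, b} ≃* Multiplicative (ZMod 2 × ZMod 4)) := by
  have hc : Commute a b := hcomm
  have key : ∀ i j k l : ℕ, (a ^ i * b ^ j) * (a ^ k * b ^ l) = a ^ (i + k) * b ^ (j + l) := by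
    intro i j k l
    rw [pow_add, pow_add, mul_assoc, ← mul_assoc (b ^ j), (hc.symm.pow_pow j k).eq,
      mul_assoc, ← mul_assoc]
  let f : Multiplicative (ZMod 2 × ZMod 4) →* Γ :=
  { toFun := fun p => a ^ ((Multiplicative.toAdd p).1.val) * b ^ ((Multiplicative.toAdd p).2.val)
    map_one' := by simp
    map_mul' := by
      intro p q
      rw [key]
      show a ^ ((Multiplicative.toAdd p).1 + (Multiplicative.toAdd q).1).val *
          b ^ ((Multiplicative.toAdd p).2 + (Multiplicative.toAdd q).2).val = _
      rw [ZMod.val_add, ZMod.val_add, ← pow_eq_pow_mod _ ha, ← pow_eq_pow_mod _ hb] }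
  have hf : Function.Injective f := by
    rw [injective_iff_map_eq_one]
    intro p hp
    obtain ⟨hi, hj⟩ := hinj _ (ZMod.val_lt (Multiplicative.toAdd p).1) _
      (ZMod.val_lt (Multiplicative.toAdd p).2) hp
    have h1 : (Multiplicative.toAdd p).1 = 0 := by
      rwa [← ZMod.val_eq_zero]
    have h2 : (Multiplicative.toAdd p).2 = 0 := by
      rwa [← ZMod.val_eq_zero]
    have : Multiplicative.toAdd p = 0 := Prod.ext h1 h2
    simpa using this
  have hrange : f.range = Subgroup.closure {a, b} := by
    apply le_antisymm
    · rintro x ⟨p, rfl⟩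
      exact mul_mem
        (pow_mem (Subgroup.subset_closure (by simp)) _)
        (pow_mem (Subgroup.subset_closure (by simp)) _)
    · rw [Subgroup.closure_le]
      rintro x (rfl | rfl)
      · exact ⟨Multiplicative.ofAdd (1, 0), by
          simp [f, show ((1 : ZMod 2)).val = 1 from rfl]⟩
      · exact ⟨Multiplicative.ofAdd (0, 1), by
          simp [f, show ((1 : ZMod 4)).val = 1 from rfl]⟩
  exact ⟨((MonoidHom.ofInjective hf).trans (MulEquiv.subgroupCongr hrange)).symm⟩

lemma plσ_mul_plσ (g h : Gp) : (pl g * σP) * (pl h * σP) = pl (g * swapAut h) := by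
  calc pl g * σP * (pl h * σP) = pl g * (σP * pl h) * σP := by group
    _ = pl g * (pl (swapAut h) * σP) * σP := by rw [sigma_mul_pl]
    _ = pl g * pl (swapAut h) * (σP * σP) := by group
    _ = pl (g * swapAut h) := by rw [sigma_sq, mul_one, pl_mul]

lemma pl_mul_plσ (g h : Gp) : pl g * (pl h * σP) = pl (g * h) * σP := by
  rw [← mul_assoc, pl_mul]

lemma plσ_mul_pl (g h : Gp) : (pl g * σP) * pl h = pl (g * swapAut h) * σP := by
  rw [mul_assoc, sigma_mul_pl, ← mul_assoc, pl_mul]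

lemma swap_pair (x y : PGL2) : swapAut (x, y) = (y, x) := rfl

-- relations for G12

lemma a_sq : (pl (mNeg, mNeg))^2 = 1 := by
  rw [pow_two, pl_mul, Prod.mk_mul_mk, nn, show ((1,1) : Gp) = 1 from rfl, pl_one]

lemma b_sq : (pl (mInv, 1) * σP)^2 = pl (mInv, mInv) := by
  rw [pow_two, plσ_mul_plσ, swap_pair, Prod.mk_mul_mk, mul_one, one_mul]

lemma b_four : (pl (mInv, 1) * σP)^4 = 1 := by
  rw [show (4:ℕ) = 2*2 from rfl, pow_mul, b_sq, pow_two, pl_mul, Prod.mk_mul_mk, vv, show ((1,1) : Gp) = 1 from rfl, pl_one]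

lemma ab_comm : pl (mNeg, mNeg) * (pl (mInv, 1) * σP) = (pl (mInv, 1) * σP) * pl (mNeg, mNeg) := by
  rw [pl_mul_plσ, plσ_mul_pl, swap_pair, Prod.mk_mul_mk, Prod.mk_mul_mk, mul_one, one_mul, nv_comm]

-- relations for G12'

lemma a'_sq : (pl (mInv, mInv))^2 = 1 := by
  rw [pow_two, pl_mul, Prod.mk_mul_mk, vv, show ((1,1) : Gp) = 1 from rfl, pl_one]

lemma b'_sq : (pl (1, mNeg) * σP)^2 = pl (mNeg, mNeg) := by
  rw [pow_two, plσ_mul_plσ, swap_pair, Prod.mk_mul_mk, mul_one, one_mul]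

lemma b'_four : (pl (1, mNeg) * σP)^4 = 1 := by
  rw [show (4:ℕ) = 2*2 from rfl, pow_mul, b'_sq, pow_two, pl_mul, Prod.mk_mul_mk, nn, show ((1,1) : Gp) = 1 from rfl, pl_one]

lemma a'b'_comm : pl (mInv, mInv) * (pl (1, mNeg) * σP)
    = (pl (1, mNeg) * σP) * pl (mInv, mInv) := by
  rw [pl_mul_plσ, plσ_mul_pl, swap_pair, Prod.mk_mul_mk, Prod.mk_mul_mk, mul_one, one_mul, nv_comm]

lemma pl_eq_one_iff (g : Gp) : pl g = 1 ↔ g = 1 := by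
  rw [← pl_one]
  exact pl_injective.eq_iff

lemma G12_iso : Nonempty (G12 ≃* Multiplicative (ZMod 2 × ZMod 4)) := by
  rw [G12]
  apply closure_iso _ _ a_sq b_four ab_comm
  intro i hi j hj h
  have hra : SemidirectProduct.rightHom (pl (mNeg, mNeg)) = 1 := rightHom_pl _
  have hrb : SemidirectProduct.rightHom (pl (mInv, 1) * σP) = -1 := by
    rw [map_mul, rightHom_pl, rightHom_sigma, one_mul]
  interval_cases i <;> interval_cases j
  · exact ⟨rfl, rfl⟩
  · exfalso
    have := congrArg SemidirectProduct.rightHom h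
    simp only [map_mul, map_pow, hra, hrb, map_one] at this
    exact absurd this (by decide)
  · exfalso
    rw [pow_zero, one_mul, b_sq, pl_eq_one_iff, Prod.ext_iff] at h
    exact v_ne_one h.1
  · exfalso
    have := congrArg SemidirectProduct.rightHom h
    simp only [map_mul, map_pow, hra, hrb, map_one] at this
    exact absurd this (by decide)
  · exfalso
    rw [pow_zero, mul_one, pow_one, pl_eq_one_iff, Prod.ext_iff] at h
    exact n_ne_one h.1
  · exfalso
    have := congrArg SemidirectProduct.rightHom h
    simp only [map_mul, map_pow, hra, hrb, map_one] at this
    exact absurd this (by decide)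
  · exfalso
    rw [pow_one, b_sq, pl_mul, Prod.mk_mul_mk, pl_eq_one_iff, Prod.ext_iff] at h
    have hnv : mNeg * mInv = 1 := h.1
    have : mNeg = mInv := by
      calc mNeg = mNeg * (mInv * mInv) := by rw [vv, mul_one]
        _ = (mNeg * mInv) * mInv := by rw [mul_assoc]
        _ = mInv := by rw [hnv, one_mul]
    exact n_ne_v this
  · exfalso
    have := congrArg SemidirectProduct.rightHom h
    simp only [map_mul, map_pow, hra, hrb, map_one] at this
    exact absurd this (by decide)

lemma G12'_iso : Nonempty (G12' ≃* Multiplicative (ZMod 2 × ZMod 4)) := by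
  rw [G12']
  apply closure_iso _ _ a'_sq b'_four a'b'_comm
  intro i hi j hj h
  have hra : SemidirectProduct.rightHom (pl (mInv, mInv)) = 1 := rightHom_pl _
  have hrb : SemidirectProduct.rightHom (pl (1, mNeg) * σP) = -1 := by
    rw [map_mul, rightHom_pl, rightHom_sigma, one_mul]
  interval_cases i <;> interval_cases j
  · exact ⟨rfl, rfl⟩
  · exfalso
    have := congrArg SemidirectProduct.rightHom h
    simp only [map_mul, map_pow, hra, hrb, map_one] at this
    exact absurd this (by decide)
  · exfalso
    rw [pow_zero, one_mul, b'_sq, pl_eq_one_iff, Prod.ext_iff] at h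
    exact n_ne_one h.1
  · exfalso
    have := congrArg SemidirectProduct.rightHom h
    simp only [map_mul, map_pow, hra, hrb, map_one] at this
    exact absurd this (by decide)
  · exfalso
    rw [pow_zero, mul_one, pow_one, pl_eq_one_iff, Prod.ext_iff] at h
    exact v_ne_one h.1
  · exfalso
    have := congrArg SemidirectProduct.rightHom h
    simp only [map_mul, map_pow, hra, hrb, map_one] at this
    exact absurd this (by decide)
  · exfalso
    rw [pow_one, b'_sq, pl_mul, Prod.mk_mul_mk, pl_eq_one_iff, Prod.ext_iff] at h
    have hnv : mInv * mNeg = 1 := h.1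
    have : mNeg = mInv := by
      calc mNeg = (mInv * mInv) * mNeg := by rw [vv, one_mul]
        _ = mInv * (mInv * mNeg) := by rw [mul_assoc]
        _ = mInv := by rw [hnv, mul_one]
    exact n_ne_v this
  · exfalso
    have := congrArg SemidirectProduct.rightHom h
    simp only [map_mul, map_pow, hra, hrb, map_one] at this
    exact absurd this (by decide)

lemma c1 : (MulAut.conj (pl (mU, mU))) (pl (mNeg, mNeg)) = pl (mInv, mInv) := by
  rw [MulAut.conj_apply, pl_mul, pl_inv, pl_mul]
  apply congrArg pl
  rw [mul_inv_eq_iff_eq_mul, Prod.mk_mul_mk, Prod.mk_mul_mk, Prod.ext_iff]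
  exact ⟨un, un⟩

lemma c2 : (MulAut.conj (pl (mU, mU))) (pl (mInv, 1) * σP) = pl (mNeg, 1) * σP := by
  rw [MulAut.conj_apply, pl_inv, pl_mul_plσ, plσ_mul_pl,
    show swapAut (((mU, mU) : Gp)⁻¹) = (mU⁻¹, mU⁻¹) from rfl]
  apply congrArg (· * σP)
  apply congrArg pl
  rw [Prod.mk_mul_mk, Prod.mk_mul_mk, Prod.ext_iff]
  constructor
  · show mU * mInv * mU⁻¹ = mNeg
    rw [mul_inv_eq_iff_eq_mul, uv]
  · show mU * 1 * mU⁻¹ = 1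
    rw [mul_one, mul_inv_cancel]

lemma b'_cube : (pl (1, mNeg) * σP)^3 = pl (mNeg, 1) * σP := by
  rw [pow_succ, b'_sq, pl_mul_plσ, Prod.mk_mul_mk, mul_one, nn]

lemma bn1_cube : (pl (mNeg, 1) * σP)^3 = pl (1, mNeg) * σP := by
  have hsq : (pl (mNeg, 1) * σP)^2 = pl (mNeg, mNeg) := by
    rw [pow_two, plσ_mul_plσ, swap_pair, Prod.mk_mul_mk, mul_one, one_mul]
  rw [pow_succ, hsq, pl_mul_plσ, Prod.mk_mul_mk, nn, mul_one]

set_option maxHeartbeats 1000000 in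

lemma conj_lemma : Subgroup.map (MulAut.conj (pl (mU, mU))).toMonoidHom G12 = G12' := by
  rw [G12, G12', MonoidHom.map_closure]
  have himg : ((MulAut.conj (pl (mU, mU))).toMonoidHom : P →* P) ''
      ({pl (mNeg, mNeg), pl (mInv, 1) * σP} : Set P)
      = {pl (mInv, mInv), pl (mNeg, 1) * σP} := by
    rw [Set.image_insert_eq, Set.image_singleton]
    simp only [MulEquiv.coe_toMonoidHom, c1, c2]
  rw [himg]
  apply le_antisymm
  · rw [Subgroup.closure_le]
    intro z hz
    simp only [Set.mem_insert_iff, Set.mem_singleton_iff] at hz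
    rcases hz with rfl | rfl
    · exact Subgroup.subset_closure (Set.mem_insert _ _)
    · have hmem : pl (1, mNeg) * σP ∈ Subgroup.closure ({pl (mInv, mInv), pl (1, mNeg) * σP} : Set P) :=
        Subgroup.subset_closure (Set.mem_insert_of_mem _ rfl)
      have : (pl (mNeg, 1) * σP) ∈ Subgroup.closure ({pl (mInv, mInv), pl (1, mNeg) * σP} : Set P) := by
        rw [← b'_cube]
        exact pow_mem hmem 3
      exact this
  · rw [Subgroup.closure_le]
    intro z hz
    simp only [Set.mem_insert_iff, Set.mem_singleton_iff] at hz
    rcases hz with rfl | rfl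
    · exact Subgroup.subset_closure (Set.mem_insert _ _)
    · have hmem : pl (mNeg, 1) * σP ∈ Subgroup.closure ({pl (mInv, mInv), pl (mNeg, 1) * σP} : Set P) :=
        Subgroup.subset_closure (Set.mem_insert_of_mem _ rfl)
      have : (pl (1, mNeg) * σP) ∈ Subgroup.closure ({pl (mInv, mInv), pl (mNeg, 1) * σP} : Set P) := by
        rw [← bn1_cube]
        exact pow_mem hmem 3
      exact this

theorem C2xC4_actions_conjugate :
    Nonempty (G12 ≃* Multiplicative (ZMod 2 × ZMod 4)) ∧
    Nonempty (G12' ≃* Multiplicative (ZMod 2 × ZMod 4)) ∧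
    ∃ h : P, Subgroup.map (MulAut.conj h).toMonoidHom G12 = G12' := by
  exact ⟨G12_iso, G12'_iso, ⟨pl (mU, mU), conj_lemma⟩⟩

end
end

section
/- Let G be the subgroup of N generated by g₁ : (x,y) ↦ (−x,−y), g₂ : (x,y) ↦ (y,−x) and g₃ : (x,y) ↦ (y⁻¹,x) (a group of order 16 isomorphic to C₂²⋊C₄). Then, for i = √−1, the G-orbit of the point (i,i) ∈ ℂˣ×ℂˣ is exactly the four-element set {(i,i), (i,−i), (−i,i), (−i,−i)}, and the image of G in the group of permutations of this orbit is cyclic of order 4. -/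
noncomputable section

/-- The torus ℂˣ × ℂˣ. -/
abbrev Pt : Type := ℂˣ × ℂˣ

/-- The scaling τ_{a,b} : (x,y) ↦ (ax, by), an element of the group N of bijections
of ℂˣ × ℂˣ. -/
def tauP (a b : ℂˣ) : Equiv.Perm Pt := (Equiv.mulLeft a).prodCongr (Equiv.mulLeft b)

/-- The inversion ι₁ : (x,y) ↦ (x⁻¹, y). -/
def inv1P : Equiv.Perm Pt := (Equiv.inv ℂˣ).prodCongr (Equiv.refl ℂˣ)

/-- The swap s : (x,y) ↦ (y, x). -/
def swP : Equiv.Perm Pt := Equiv.prodComm ℂˣ ℂˣ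

/-- g₁ : (x,y) ↦ (−x,−y). -/
def g1 : Equiv.Perm Pt := tauP (-1) (-1)

/-- g₂ : (x,y) ↦ (y,−x). -/
def g2 : Equiv.Perm Pt := tauP 1 (-1) * swP

/-- g₃ : (x,y) ↦ (y⁻¹,x). -/
def g3 : Equiv.Perm Pt := inv1P * swP

/-- G = ⟨g₁, g₂, g₃⟩ ≅ C₂²⋊C₄, a subgroup of N of order 16. -/
def G15 : Subgroup (Equiv.Perm Pt) := Subgroup.closure {g1, g2, g3}

/-- i = √−1 as a unit of ℂ. -/
def uI : ℂˣ := Units.mk0 Complex.I Complex.I_ne_zero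

lemma uI_inv : uI⁻¹ = -uI := by ext; simp [uI, Complex.inv_I]
lemma neg_uI_inv : (-uI)⁻¹ = uI := by rw [inv_neg, uI_inv, neg_neg]
lemma uI_ne_neg : uI ≠ -uI := by
  intro h
  rw [Units.ext_iff] at h
  simp only [Units.val_neg] at h
  have hI : (uI : ℂ) = Complex.I := rfl
  rw [hI] at h
  exact Complex.I_ne_zero (by linear_combination h/2)

lemma g1_apply (x y : ℂˣ) : g1 (x, y) = (-x, -y) := by simp [g1, tauP]
lemma g2_apply (x y : ℂˣ) : g2 (x, y) = (y, -x) := by simp [g2, tauP, swP]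
lemma g3_apply (x y : ℂˣ) : g3 (x, y) = (y⁻¹, x) := by simp [g3, inv1P, swP]
lemma g1_inv_apply (x y : ℂˣ) : g1⁻¹ (x, y) = (-x, -y) := by
  rw [Equiv.Perm.inv_def, Equiv.symm_apply_eq, g1_apply]; simp
lemma g2_inv_apply (x y : ℂˣ) : g2⁻¹ (x, y) = (-y, x) := by
  rw [Equiv.Perm.inv_def, Equiv.symm_apply_eq, g2_apply]; simp
lemma g3_inv_apply (x y : ℂˣ) : g3⁻¹ (x, y) = (y, x⁻¹) := by
  rw [Equiv.Perm.inv_def, Equiv.symm_apply_eq, g3_apply]; simp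

lemma g1_eq_g2_sq : g1 = g2 ^ 2 := by
  ext p <;> simp [g1, g2, tauP, swP, pow_succ]
lemma g2_pow4 : g2 ^ 4 = 1 := by
  ext p <;> simp [g2, tauP, swP, pow_succ]

lemma hg1 : g1 ∈ G15 := Subgroup.subset_closure (by simp)
lemma hg2 : g2 ∈ G15 := Subgroup.subset_closure (by simp)
lemma hg3 : g3 ∈ G15 := Subgroup.subset_closure (by simp)


/-!
STATEMENT 15: the G-orbit of (i,i) is exactly {(i,i),(i,−i),(−i,i),(−i,−i)}, and the
image of G in the group of permutations of this orbit is cyclic of order 4.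
-/
theorem orbit_of_ii_and_cyclic_image :
    MulAction.orbit G15 ((uI, uI) : Pt) =
      {((uI, uI) : Pt), (uI, -uI), (-uI, uI), (-uI, -uI)} ∧
    ∃ ψ : G15 →* Equiv.Perm (MulAction.orbit G15 ((uI, uI) : Pt)),
      (∀ (g : G15) (x : MulAction.orbit G15 ((uI, uI) : Pt)),
        (ψ g x : Pt) = g • (x : Pt)) ∧
      IsCyclic ψ.range ∧ Nat.card ψ.range = 4 := by
  set S : Set Pt := {((uI, uI) : Pt), (uI, -uI), (-uI, uI), (-uI, -uI)} with hS
  have horb : MulAction.orbit G15 ((uI, uI) : Pt) = S := by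
    apply Set.eq_of_subset_of_subset
    · rintro p ⟨⟨g, hg⟩, rfl⟩
      have key : ∀ g ∈ G15, (∀ q ∈ S, g q ∈ S) ∧ (∀ q ∈ S, g⁻¹ q ∈ S) := by
        intro g hg
        induction hg using Subgroup.closure_induction with
        | mem x hx =>
          simp only [Set.mem_insert_iff, Set.mem_singleton_iff] at hx
          rcases hx with rfl | rfl | rfl <;>
            refine ⟨?_, ?_⟩ <;> intro q hq <;>
            simp only [hS, Set.mem_insert_iff, Set.mem_singleton_iff] at hq <;>
            rcases hq with rfl | rfl | rfl | rfl <;>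
            simp [hS, g1_apply, g2_apply, g3_apply, g1_inv_apply, g2_inv_apply,
              g3_inv_apply, uI_inv, neg_uI_inv]
        | one => simp
        | mul x y hx hy ihx ihy =>
          exact ⟨fun q hq => ihx.1 _ (ihy.1 q hq),
            fun q hq => by rw [mul_inv_rev]; exact ihy.2 _ (ihx.2 q hq)⟩
        | inv x hx ih => exact ⟨ih.2, by simpa using ih.1⟩
      have hpt : ((uI, uI) : Pt) ∈ S := by simp [hS]
      exact (key g hg).1 _ hpt
    · intro p hp
      simp only [hS, Set.mem_insert_iff, Set.mem_singleton_iff] at hp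
      rcases hp with rfl | rfl | rfl | rfl
      · exact MulAction.mem_orbit_self _
      · exact ⟨⟨g2, hg2⟩, show g2 (uI, uI) = ((uI, -uI) : Pt) by rw [g2_apply]⟩
      · exact ⟨⟨g3, hg3⟩, show g3 (uI, uI) = ((-uI, uI) : Pt) by rw [g3_apply, uI_inv]⟩
      · exact ⟨⟨g1, hg1⟩, show g1 (uI, uI) = ((-uI, -uI) : Pt) by rw [g1_apply]⟩
  refine ⟨horb, MulAction.toPermHom G15 _, fun g x => rfl, ?_, ?_⟩
  all_goals {
    set ψ := MulAction.toPermHom G15 (MulAction.orbit G15 ((uI, uI) : Pt)) with hψ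
    set c : Equiv.Perm (MulAction.orbit G15 ((uI, uI) : Pt)) := ψ ⟨g2, hg2⟩ with hc
    have hc4 : c ^ 4 = 1 := by
      rw [hc, ← map_pow, ← map_one ψ]
      congr 1
      exact Subtype.ext g2_pow4
    have hc2 : c ^ 2 ≠ 1 := by
      intro h
      have := congrArg (fun e : Equiv.Perm (MulAction.orbit G15 ((uI, uI) : Pt)) =>
        ((e ⟨(uI, uI), MulAction.mem_orbit_self _⟩ : _) : Pt)) h
      simp only [pow_two, Equiv.Perm.mul_apply, Equiv.Perm.one_apply] at this
      have h2 : (c (c ⟨(uI, uI), MulAction.mem_orbit_self _⟩) : Pt) = (-uI, -uI) := by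
        show (g2 (g2 (uI, uI))) = _
        rw [g2_apply, g2_apply]
      rw [h2] at this
      exact uI_ne_neg (congrArg Prod.fst this).symm
    have hord : orderOf c = 4 := by
      have hnot : ¬ c ^ 2 ^ 1 = 1 := by simpa using hc2
      have hfin : c ^ 2 ^ (1 + 1) = 1 := by norm_num; exact hc4
      have := orderOf_eq_prime_pow hnot hfin
      norm_num at this
      exact this
    have hg1c : ψ ⟨g1, hg1⟩ = c ^ 2 := by
      rw [hc, ← map_pow]
      congr 1
      exact Subtype.ext g1_eq_g2_sq
    have hg3c : ψ ⟨g3, hg3⟩ = c⁻¹ := by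
      rw [eq_inv_iff_mul_eq_one]
      apply Equiv.ext
      rintro ⟨p, hp⟩
      have hp' := hp
      rw [horb] at hp'
      apply Subtype.ext
      show (g3 (g2 p)) = p
      simp only [hS, Set.mem_insert_iff, Set.mem_singleton_iff] at hp'
      rcases hp' with rfl | rfl | rfl | rfl <;>
        simp [g2_apply, g3_apply, uI_inv, neg_uI_inv]
    have hrange : ψ.range = Subgroup.zpowers c := by
      apply le_antisymm
      · rintro x ⟨⟨g, hg⟩, rfl⟩
        have key : ∀ g (hg : g ∈ G15), ψ ⟨g, hg⟩ ∈ Subgroup.zpowers c := by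
          intro g hg
          induction hg using Subgroup.closure_induction with
          | mem x hx =>
            simp only [Set.mem_insert_iff, Set.mem_singleton_iff] at hx
            rcases hx with rfl | rfl | rfl
            · rw [hg1c]; exact pow_mem (Subgroup.mem_zpowers c) 2
            · exact Subgroup.mem_zpowers c
            · rw [hg3c]; exact inv_mem (Subgroup.mem_zpowers c)
          | one => rw [show (⟨1, Subgroup.one_mem _⟩ : G15) = 1 from rfl, map_one]; exact one_mem _
          | mul x y hx hy ihx ihy =>
            rw [show (⟨x * y, mul_mem hx hy⟩ : G15) = ⟨x, hx⟩ * ⟨y, hy⟩ from rfl, map_mul]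
            exact mul_mem ihx ihy
          | inv x hx ih =>
            rw [show (⟨x⁻¹, inv_mem hx⟩ : G15) = (⟨x, hx⟩ : G15)⁻¹ from rfl, map_inv]
            exact inv_mem ih
        exact key g hg
      · rw [Subgroup.zpowers_le]
        exact ⟨⟨g2, hg2⟩, rfl⟩
    rw [hrange]
    first
    | exact ⟨⟨⟨c, Subgroup.mem_zpowers c⟩, by
        rintro ⟨x, n, rfl⟩
        exact ⟨n, Subtype.ext (by simp)⟩⟩⟩
    | rw [Nat.card_zpowers, hord]
  }

end
end
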